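/- The optimal cost function J* is the unique solution of Bellman's equation within the set of functions {J : X → [0,∞] : 0 ≤ J ≤ c·J* for some c > 0}. Moreover, if {J_k} is the sequence generated by the value iteration algorithm J_{k+1}(x) = inf_{u ∈ U(x)} E_{w~P(·|x,u)}[ g(x,u,w) + J_k(f(x,u,w)) ] starting from any J₀ in the set W* = {J : J* ≤ J ≤ c·J* for some c > 0}, then J_k(x) → J*(x) for every x ∈ X. -/

import Mathlib

open scoped ENNReal
open Filter
open scoped Classical NNReal

/-- A stochastic shortest path (SSP) problem with state space `X`, control space `U`,
countable disturbance space `W`, a cost-free absorbing termination state `t`,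
nonempty control constraint sets `Uc x ⊆ U`, disturbance distributions `P x u`,
system function `f`, and nonnegative (finite-valued) cost per stage `g`. -/
structure SSP (X U W : Type*) [Countable W] where
  t : X
  Uc : X → Set U
  Uc_nonempty : ∀ x, (Uc x).Nonempty
  P : X → U → PMF W
  f : X → U → W → X
  g : X → U → W → ℝ≥0∞
  g_lt_top : ∀ x u w, g x u w < ⊤
  f_absorb : ∀ u ∈ Uc t, ∀ w, f t u w = t
  g_zero : ∀ u ∈ Uc t, ∀ w, g t u w = 0

namespace SSP

variable {X U W : Type*} [Countable W] (S : SSP X U W)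

/-- A policy `π = (μ₀, μ₁, …)` is admissible if `μ_k(x) ∈ U(x)` for all `k, x`. -/
def IsPolicy (π : ℕ → X → U) : Prop := ∀ k x, π k x ∈ S.Uc x

/-- Distribution of the state `x_k` after `k` steps under policy `π` starting from `x₀`. -/
noncomputable def stateDist (π : ℕ → X → U) (x₀ : X) : ℕ → PMF X
  | 0 => PMF.pure x₀
  | k + 1 => (stateDist π x₀ k).bind fun x => (S.P x (π k x)).map (S.f x (π k x))

/-- Expected value `E^π_{x₀}[J(x_k)]` of a nonnegative function along the trajectory. -/
noncomputable def expect (π : ℕ → X → U) (x₀ : X) (k : ℕ) (J : X → ℝ≥0∞) : ℝ≥0∞ :=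
  ∑' x, S.stateDist π x₀ k x * J x

/-- Expected cost `E^π_{x₀}[g(x_k, μ_k(x_k), w_k)]` of the `k`-th stage. -/
noncomputable def stageCost (π : ℕ → X → U) (x₀ : X) (k : ℕ) : ℝ≥0∞ :=
  S.expect π x₀ k fun x => ∑' w, S.P x (π k x) w * S.g x (π k x) w

/-- The cost `J_π(x₀) = Σ_{k≥0} E^π_{x₀}[g(x_k, μ_k(x_k), w_k)]` of a policy. -/
noncomputable def Jcost (π : ℕ → X → U) (x₀ : X) : ℝ≥0∞ :=
  ∑' k, S.stageCost π x₀ k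

/-- `r_k(π, x₀)`: probability that `x_k ≠ t` under `π` starting from `x₀`. -/
noncomputable def r (π : ℕ → X → U) (x₀ : X) (k : ℕ) : ℝ≥0∞ :=
  S.expect π x₀ k fun x => if x = S.t then 0 else 1

/-- `Σ_{k≥0} r_k(π,x₀)`: expected number of steps to reach the destination. -/
noncomputable def N (π : ℕ → X → U) (x₀ : X) : ℝ≥0∞ := ∑' k, S.r π x₀ k

/-- A policy is proper at `x` if it is admissible, `J_π(x) < ∞` and `Σ_k r_k(π,x) < ∞`. -/
def ProperAt (π : ℕ → X → U) (x : X) : Prop :=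
  S.IsPolicy π ∧ S.Jcost π x < ⊤ ∧ S.N π x < ⊤

/-- The optimal cost function `J*`. -/
noncomputable def Jstar (x : X) : ℝ≥0∞ := ⨅ π ∈ {π | S.IsPolicy π}, S.Jcost π x

/-- The restricted optimal cost function `Ĵ` over policies proper at `x`
(infimum over the empty set is `∞`). -/
noncomputable def Jhat (x : X) : ℝ≥0∞ := ⨅ π ∈ {π | S.ProperAt π x}, S.Jcost π x

/-- The effective domain `X̂ = {x | Ĵ(x) < ∞}` of `Ĵ`. -/
def Xhat : Set X := {x | S.Jhat x < ⊤}

/-- Expected `k`-th stage cost in the `δ`-perturbed problem (stage cost `g + δ` off `t`). -/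
noncomputable def stageCostPert (δ : ℝ≥0∞) (π : ℕ → X → U) (x₀ : X) (k : ℕ) : ℝ≥0∞ :=
  S.expect π x₀ k fun x =>
    ∑' w, S.P x (π k x) w * (S.g x (π k x) w + if x = S.t then 0 else δ)

/-- The cost `J_{π,δ}` of a policy in the `δ`-perturbed problem. -/
noncomputable def Jpert (δ : ℝ≥0∞) (π : ℕ → X → U) (x₀ : X) : ℝ≥0∞ :=
  ∑' k, S.stageCostPert δ π x₀ k

/-- The optimal cost function `Ĵ_δ` of the `δ`-perturbed problem. -/
noncomputable def JhatPert (δ : ℝ≥0∞) (x : X) : ℝ≥0∞ :=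
  ⨅ π ∈ {π | S.IsPolicy π}, S.Jpert δ π x

/-- `Q J x u = E_{w∼P(·|x,u)}[g(x,u,w) + J(f(x,u,w))]`. -/
noncomputable def Q (J : X → ℝ≥0∞) (x : X) (u : U) : ℝ≥0∞ :=
  ∑' w, S.P x u w * (S.g x u w + J (S.f x u w))

/-- The Bellman operator `(TJ)(x) = inf_{u ∈ U(x)} E[g(x,u,w) + J(f(x,u,w))]`. -/
noncomputable def bellman (J : X → ℝ≥0∞) (x : X) : ℝ≥0∞ := ⨅ u ∈ S.Uc x, S.Q J x u

/-- The tail policy `π_k = (μ_k, μ_{k+1}, …)`. -/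
def tail (π : ℕ → X → U) (k : ℕ) : ℕ → X → U := fun m => π (k + m)

/-- The set `Ŵ` of functions `J` with `J(t) = 0`, `Ĵ ≤ J`, and
`E^π_{x₀}[J(x_k)] → 0` for every pair `(π, x₀)` with `π` proper at `x₀`. -/
def What : Set (X → ℝ≥0∞) :=
  {J | J S.t = 0 ∧ S.Jhat ≤ J ∧
    ∀ π x₀, S.ProperAt π x₀ → Tendsto (fun k => S.expect π x₀ k J) atTop (nhds 0)}

/-- The set `B` of functions `J` with `J(t) = 0` that are bounded over `X̂`. -/
def Bset : Set (X → ℝ≥0∞) :=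
  {J | J S.t = 0 ∧ (⨆ x ∈ S.Xhat, J x) < ⊤}

/-- A policy is uniformly proper if it is admissible and the expected number of steps
to reach the destination is uniformly bounded over `X̂`. -/
def UniformlyProper (π : ℕ → X → U) : Prop :=
  S.IsPolicy π ∧ (⨆ x ∈ S.Xhat, S.N π x) < ⊤

/-- The cost per stage `g` is (uniformly) bounded over `X × U × W`. -/
def BoundedCost : Prop := ∃ b : ℝ≥0∞, b < ⊤ ∧ ∀ x u w, S.g x u w ≤ b

end SSP

namespace SSP

variable {X U W : Type*} [Countable W] (S : SSP X U W)

private lemma tsum_map_mul (p : PMF W) (φ : W → X) (G : X → ℝ≥0∞) :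
    ∑' y, (p.map φ) y * G y = ∑' w, p w * G (φ w) := by
  have h1 : ∀ y, (p.map φ) y * G y = ∑' w, (if y = φ w then p w * G (φ w) else 0) := by
    intro y
    rw [PMF.map_apply, ← ENNReal.tsum_mul_right]
    exact tsum_congr fun w => by by_cases h : y = φ w <;> simp [h]
  calc ∑' y, (p.map φ) y * G y
      = ∑' (y : X) (w : W), (if y = φ w then p w * G (φ w) else 0) := tsum_congr h1
    _ = ∑' (w : W) (y : X), (if y = φ w then p w * G (φ w) else 0) := ENNReal.tsum_comm
    _ = ∑' w, p w * G (φ w) := tsum_congr fun w => tsum_ite_eq (φ w) _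

private lemma tsum_bind_mul (p : PMF X) (q : X → PMF X) (G : X → ℝ≥0∞) :
    ∑' y, (p.bind q) y * G y = ∑' z, p z * ∑' y, q z y * G y := by
  calc ∑' y, (p.bind q) y * G y
      = ∑' (y : X) (z : X), p z * q z y * G y := by
        refine tsum_congr fun y => ?_
        rw [PMF.bind_apply, ENNReal.tsum_mul_right]
    _ = ∑' (z : X) (y : X), p z * q z y * G y := ENNReal.tsum_comm
    _ = ∑' z, p z * ∑' y, q z y * G y := by
        refine tsum_congr fun z => ?_
        rw [← ENNReal.tsum_mul_left]
        exact tsum_congr fun y => mul_assoc _ _ _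

lemma expect_zero (π : ℕ → X → U) (x : X) (F : X → ℝ≥0∞) :
    S.expect π x 0 F = F x := by
  unfold expect stateDist
  have h : ∀ z, (PMF.pure x) z * F z = if z = x then F x else 0 := by
    intro z
    rw [PMF.pure_apply]
    by_cases h : z = x <;> simp [h]
  rw [tsum_congr h]; exact tsum_ite_eq x (fun _ => F x)

lemma expect_succ (π : ℕ → X → U) (x : X) (k : ℕ) (F : X → ℝ≥0∞) :
    S.expect π x (k+1) F
      = ∑' z, S.stateDist π x k z * ∑' w, S.P z (π k z) w * F (S.f z (π k z) w) := by
  show ∑' y, ((S.stateDist π x k).bind fun z => (S.P z (π k z)).map (S.f z (π k z))) y * F y = _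
  rw [tsum_bind_mul]
  exact tsum_congr fun z => by rw [tsum_map_mul]

lemma expect_mono (π : ℕ → X → U) (x : X) (k : ℕ) {F G : X → ℝ≥0∞} (h : ∀ z, F z ≤ G z) :
    S.expect π x k F ≤ S.expect π x k G :=
  ENNReal.tsum_le_tsum (fun z => mul_le_mul_right (h z) _)

lemma expect_add (π : ℕ → X → U) (x : X) (k : ℕ) (F G : X → ℝ≥0∞) :
    S.expect π x k (fun z => F z + G z) = S.expect π x k F + S.expect π x k G := by
  unfold expect
  rw [← ENNReal.tsum_add]
  exact tsum_congr fun z => mul_add _ _ _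

lemma expect_const (π : ℕ → X → U) (x : X) (k : ℕ) (c : ℝ≥0∞) :
    S.expect π x k (fun _ => c) = c := by
  unfold expect
  rw [ENNReal.tsum_mul_right, PMF.tsum_coe, one_mul]

lemma expect_smul (π : ℕ → X → U) (x : X) (k : ℕ) (c : ℝ≥0∞) (F : X → ℝ≥0∞) :
    S.expect π x k (fun z => c * F z) = c * S.expect π x k F := by
  unfold expect
  rw [← ENNReal.tsum_mul_left]
  exact tsum_congr fun z => by ring

lemma Q_eq (J : X → ℝ≥0∞) (x : X) (u : U) :
    S.Q J x u = (∑' w, S.P x u w * S.g x u w) + ∑' w, S.P x u w * J (S.f x u w) := by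
  unfold Q
  rw [← ENNReal.tsum_add]
  exact tsum_congr fun w => mul_add _ _ _

lemma Q_mono {J J' : X → ℝ≥0∞} (h : ∀ z, J z ≤ J' z) (x : X) (u : U) :
    S.Q J x u ≤ S.Q J' x u :=
  ENNReal.tsum_le_tsum (fun w => mul_le_mul_right (add_le_add_right (h _) _) _)

lemma bellman_mono {J J' : X → ℝ≥0∞} (h : ∀ z, J z ≤ J' z) (x : X) :
    S.bellman J x ≤ S.bellman J' x :=
  iInf_mono fun u => iInf_mono' fun hu => ⟨hu, S.Q_mono h x u⟩

lemma stage_zero (π : ℕ → X → U) (x : X) :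
    S.stageCost π x 0 = ∑' w, S.P x (π 0 x) w * S.g x (π 0 x) w :=
  S.expect_zero π x _

/-- The fundamental identity. -/
lemma expect_Q (π : ℕ → X → U) (x : X) (k : ℕ) (J : X → ℝ≥0∞) :
    S.expect π x k (fun z => S.Q J z (π k z))
      = S.stageCost π x k + S.expect π x (k+1) J := by
  have h : (fun z => S.Q J z (π k z))
      = fun z => (∑' w, S.P z (π k z) w * S.g z (π k z) w)
        + ∑' w, S.P z (π k z) w * J (S.f z (π k z) w) :=
    funext fun z => S.Q_eq J z (π k z)
  rw [h, expect_add]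
  congr 1
  rw [expect_succ]
  rfl

lemma step_le (π : ℕ → X → U) (x : X) (k : ℕ) (J : X → ℝ≥0∞) (δ : ℝ≥0∞)
    (h : ∀ z, S.Q J z (π k z) ≤ J z + δ) :
    S.stageCost π x k + S.expect π x (k+1) J ≤ S.expect π x k J + δ := by
  rw [← expect_Q]
  calc S.expect π x k (fun z => S.Q J z (π k z))
      ≤ S.expect π x k (fun z => J z + δ) := S.expect_mono π x k h
    _ = S.expect π x k J + δ := by rw [expect_add, expect_const]

lemma descent (π : ℕ → X → U) (x : X) (J : X → ℝ≥0∞) (δ : ℕ → ℝ≥0∞) (j : ℕ)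
    (h : ∀ k z, S.Q J z (π (j+k) z) ≤ J z + δ k) :
    ∀ n, (∑ k ∈ Finset.range n, S.stageCost π x (j+k)) + S.expect π x (j+n) J
      ≤ S.expect π x j J + ∑ k ∈ Finset.range n, δ k := by
  intro n
  induction n with
  | zero => simp
  | succ n ih =>
    rw [Finset.sum_range_succ, Finset.sum_range_succ]
    have e : j + (n+1) = (j+n) + 1 := by omega
    rw [e]
    have h1 : S.stageCost π x (j+n) + S.expect π x ((j+n)+1) J
        ≤ S.expect π x (j+n) J + δ n := S.step_le π x (j+n) J (δ n) (h n)
    calc (∑ k ∈ Finset.range n, S.stageCost π x (j+k)) + S.stageCost π x (j+n)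
          + S.expect π x ((j+n)+1) J
        = (∑ k ∈ Finset.range n, S.stageCost π x (j+k))
          + (S.stageCost π x (j+n) + S.expect π x ((j+n)+1) J) := by ring
      _ ≤ (∑ k ∈ Finset.range n, S.stageCost π x (j+k))
          + (S.expect π x (j+n) J + δ n) := add_le_add_right h1 _
      _ = ((∑ k ∈ Finset.range n, S.stageCost π x (j+k)) + S.expect π x (j+n) J) + δ n := by
          ring
      _ ≤ (S.expect π x j J + ∑ k ∈ Finset.range n, δ k) + δ n := add_le_add_left ih _
      _ = S.expect π x j J + (∑ k ∈ Finset.range n, δ k + δ n) := by ring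

lemma geom_sum_le (ε : ℝ≥0∞) (n : ℕ) :
    ∑ k ∈ Finset.range n, ε * 2⁻¹ ^ (k+1) ≤ ε := by
  calc ∑ k ∈ Finset.range n, ε * 2⁻¹ ^ (k+1) ≤ ∑' k : ℕ, ε * 2⁻¹ ^ (k+1) :=
        ENNReal.sum_le_tsum _
    _ = ε * (2⁻¹ * ∑' k : ℕ, (2⁻¹ : ℝ≥0∞) ^ k) := by
        rw [ENNReal.tsum_mul_left]; congr 1
        rw [← ENNReal.tsum_mul_left]
        exact tsum_congr fun k => by rw [pow_succ']
    _ = ε := by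
        rw [ENNReal.tsum_geometric, ENNReal.one_sub_inv_two, inv_inv,
          ENNReal.inv_mul_cancel (by norm_num) (by norm_num), mul_one]

lemma exists_policy_Q_le (J : X → ℝ≥0∞) (hJ : ∀ z, S.bellman J z ≤ J z)
    (δ : ℕ → ℝ≥0∞) (hδ : ∀ k, 0 < δ k) :
    ∃ π, S.IsPolicy π ∧ ∀ k z, S.Q J z (π k z) ≤ J z + δ k := by
  have h : ∀ k z, ∃ u, u ∈ S.Uc z ∧ S.Q J z u ≤ J z + δ k := by
    intro k z
    by_cases hz : J z = ⊤
    · obtain ⟨u, hu⟩ := S.Uc_nonempty z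
      exact ⟨u, hu, by simp [hz]⟩
    · have hlt : S.bellman J z < J z + δ k :=
        lt_of_le_of_lt (hJ z) (ENNReal.lt_add_right hz (hδ k).ne')
      rw [bellman] at hlt
      obtain ⟨u, hu⟩ := iInf_lt_iff.mp hlt
      obtain ⟨hmem, hQ⟩ := iInf_lt_iff.mp hu
      exact ⟨u, hmem, hQ.le⟩
  choose π hmem hQ using h
  exact ⟨π, fun k z => hmem k z, hQ⟩

lemma Jstar_le_Jcost {π : ℕ → X → U} (hπ : S.IsPolicy π) (x : X) :
    S.Jstar x ≤ S.Jcost π x :=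
  iInf₂_le π hπ

lemma tail_policy {π : ℕ → X → U} (hπ : S.IsPolicy π) (k : ℕ) :
    S.IsPolicy (SSP.tail π k) := fun m z => hπ (k+m) z

/-- Any superfixed point of the Bellman operator dominates `J*`. -/
lemma Jstar_le_of_bellman_le (J : X → ℝ≥0∞) (hJ : ∀ z, S.bellman J z ≤ J z) (x : X) :
    S.Jstar x ≤ J x := by
  refine ENNReal.le_of_forall_pos_le_add fun ε hε _ => ?_
  set δ : ℕ → ℝ≥0∞ := fun k => (ε : ℝ≥0∞) * 2⁻¹ ^ (k+1) with hδdef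
  have hδ : ∀ k, 0 < δ k := fun k => by
    refine ENNReal.mul_pos ?_ ?_
    · exact_mod_cast hε.ne'
    · exact (pow_ne_zero _ (by norm_num))
  obtain ⟨π, hπ, hQ⟩ := S.exists_policy_Q_le J hJ δ hδ
  have hdes := S.descent π x J δ 0 (fun k z => by simpa using hQ k z)
  have hJc : S.Jcost π x ≤ J x + ε := by
    rw [Jcost, ENNReal.tsum_eq_iSup_nat]
    refine iSup_le fun n => ?_
    have h1 : (∑ k ∈ Finset.range n, S.stageCost π x k) + S.expect π x n J
        ≤ S.expect π x 0 J + ∑ k ∈ Finset.range n, δ k := by simpa using hdes n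
    calc ∑ k ∈ Finset.range n, S.stageCost π x k
        ≤ (∑ k ∈ Finset.range n, S.stageCost π x k) + S.expect π x n J := le_self_add
      _ ≤ S.expect π x 0 J + ∑ k ∈ Finset.range n, δ k := h1
      _ ≤ J x + ε := by
          rw [S.expect_zero]
          exact add_le_add_right (SSP.geom_sum_le ε n) _
  exact le_trans (S.Jstar_le_Jcost hπ x) hJc

lemma expect_one (π : ℕ → X → U) (x : X) (k : ℕ) (F : X → ℝ≥0∞) :
    S.expect π x (k+1) F
      = ∑' w, S.P x (π 0 x) w * S.expect (SSP.tail π 1) (S.f x (π 0 x) w) k F := by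
  induction k generalizing F with
  | zero =>
    rw [expect_succ]
    have h0 : ∑' z, S.stateDist π x 0 z * ∑' w, S.P z (π 0 z) w * F (S.f z (π 0 z) w)
        = ∑' w, S.P x (π 0 x) w * F (S.f x (π 0 x) w) :=
      S.expect_zero π x (fun z => ∑' w, S.P z (π 0 z) w * F (S.f z (π 0 z) w))
    rw [h0]
    exact tsum_congr fun w => by rw [S.expect_zero]
  | succ k ih =>
    have htl : (SSP.tail π 1) k = π (k+1) := congrArg π (Nat.add_comm 1 k)
    calc S.expect π x (k+1+1) F
        = S.expect π x (k+1) (fun z => ∑' w, S.P z (π (k+1) z) w * F (S.f z (π (k+1) z) w)) := by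
          rw [expect_succ]; rfl
      _ = ∑' w, S.P x (π 0 x) w * S.expect (SSP.tail π 1) (S.f x (π 0 x) w) k
            (fun z => ∑' w', S.P z (π (k+1) z) w' * F (S.f z (π (k+1) z) w')) := ih _
      _ = ∑' w, S.P x (π 0 x) w * S.expect (SSP.tail π 1) (S.f x (π 0 x) w) (k+1) F := by
          refine tsum_congr fun w => ?_
          congr 1
          rw [expect_succ, htl]
          rfl

lemma stage_one (π : ℕ → X → U) (x : X) (k : ℕ) :
    S.stageCost π x (k+1)
      = ∑' w, S.P x (π 0 x) w * S.stageCost (SSP.tail π 1) (S.f x (π 0 x) w) k := by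
  have htl : (SSP.tail π 1) k = π (k+1) := congrArg π (Nat.add_comm 1 k)
  show S.expect π x (k+1) _ = _
  rw [expect_one]
  refine tsum_congr fun w => ?_
  congr 1
  show S.expect _ _ k (fun z => ∑' w', S.P z (π (k+1) z) w' * S.g z (π (k+1) z) w')
    = S.expect _ _ k (fun z => ∑' w', S.P z ((SSP.tail π 1) k z) w' * S.g z ((SSP.tail π 1) k z) w')
  rw [htl]

lemma Jcost_one (π : ℕ → X → U) (x : X) :
    S.Jcost π x = S.stageCost π x 0
      + ∑' w, S.P x (π 0 x) w * S.Jcost (SSP.tail π 1) (S.f x (π 0 x) w) := by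
  rw [Jcost, tsum_eq_zero_add' ENNReal.summable]
  congr 1
  calc ∑' k, S.stageCost π x (k+1)
      = ∑' (k : ℕ) (w : W), S.P x (π 0 x) w * S.stageCost (SSP.tail π 1) (S.f x (π 0 x) w) k :=
        tsum_congr fun k => S.stage_one π x k
    _ = ∑' (w : W) (k : ℕ), S.P x (π 0 x) w * S.stageCost (SSP.tail π 1) (S.f x (π 0 x) w) k :=
        ENNReal.tsum_comm
    _ = ∑' w, S.P x (π 0 x) w * S.Jcost (SSP.tail π 1) (S.f x (π 0 x) w) :=
        tsum_congr fun w => ENNReal.tsum_mul_left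

lemma bellman_le_Jstar (x : X) : S.bellman S.Jstar x ≤ S.Jstar x := by
  rw [Jstar]
  refine le_iInf₂ fun π hπ => ?_
  have hπ' : S.IsPolicy π := hπ
  calc S.bellman S.Jstar x ≤ S.Q S.Jstar x (π 0 x) := iInf₂_le _ (hπ' 0 x)
    _ = (∑' w, S.P x (π 0 x) w * S.g x (π 0 x) w)
        + ∑' w, S.P x (π 0 x) w * S.Jstar (S.f x (π 0 x) w) := S.Q_eq _ x _
    _ ≤ S.stageCost π x 0
        + ∑' w, S.P x (π 0 x) w * S.Jcost (SSP.tail π 1) (S.f x (π 0 x) w) := by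
        refine add_le_add (le_of_eq (S.stage_zero π x).symm) ?_
        refine ENNReal.tsum_le_tsum (fun w => mul_le_mul_right ?_ _)
        exact S.Jstar_le_Jcost (S.tail_policy hπ' 1) _
    _ = S.Jcost π x := (S.Jcost_one π x).symm

lemma Jstar_le_bellman (x : X) : S.Jstar x ≤ S.bellman S.Jstar x := by
  rw [bellman]
  refine le_iInf₂ fun u hu => ?_
  refine ENNReal.le_of_forall_pos_le_add fun ε hε _ => ?_
  set δ : ℕ → ℝ≥0∞ := fun k => (ε : ℝ≥0∞) * 2⁻¹ ^ (k+1) with hδdef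
  have hδ : ∀ k, 0 < δ k := fun k => by
    refine ENNReal.mul_pos ?_ ?_
    · exact_mod_cast hε.ne'
    · exact (pow_ne_zero _ (by norm_num))
  obtain ⟨π', hπ', hQ'⟩ := S.exists_policy_Q_le S.Jstar S.bellman_le_Jstar δ hδ
  set π : ℕ → X → U := fun k => Nat.casesOn k
    (fun z => if z = x then u else (S.Uc_nonempty z).choose) (fun k' => π' k') with hπdef
  have hπ : S.IsPolicy π := by
    intro k z
    cases k with
    | zero =>
      show (if z = x then u else (S.Uc_nonempty z).choose) ∈ S.Uc z
      split_ifs with h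
      · exact h ▸ hu
      · exact (S.Uc_nonempty z).choose_spec
    | succ k' => exact hπ' k' z
  have hQs : ∀ k z, S.Q S.Jstar z (π (1+k) z) ≤ S.Jstar z + δ k := by
    intro k z
    have h1 : (1:ℕ) + k = k + 1 := Nat.add_comm 1 k
    rw [h1]
    exact hQ' k z
  have hdes := S.descent π x S.Jstar δ 1 hQs
  have hQ0 : S.stageCost π x 0 + S.expect π x 1 S.Jstar = S.Q S.Jstar x u := by
    have h := S.expect_Q π x 0 S.Jstar
    rw [S.expect_zero] at h
    rw [← h]
    have : π 0 x = u := if_pos rfl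
    rw [this]
  have hJc : S.Jcost π x ≤ S.Q S.Jstar x u + ε := by
    rw [Jcost, ENNReal.tsum_eq_iSup_nat]
    refine iSup_le fun n => ?_
    calc ∑ k ∈ Finset.range n, S.stageCost π x k
        ≤ ∑ k ∈ Finset.range (n+1), S.stageCost π x k :=
          Finset.sum_le_sum_of_subset (Finset.range_subset_range.mpr (Nat.le_succ n))
      _ = (∑ k ∈ Finset.range n, S.stageCost π x (k+1)) + S.stageCost π x 0 :=
          Finset.sum_range_succ'
            (fun k => S.stageCost π x k) n
      _ = (∑ k ∈ Finset.range n, S.stageCost π x (1+k)) + S.stageCost π x 0 := by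
          congr 1
          exact Finset.sum_congr rfl fun k _ => by rw [Nat.add_comm 1 k]
      _ ≤ (S.expect π x 1 S.Jstar + ∑ k ∈ Finset.range n, δ k) + S.stageCost π x 0 := by
          refine add_le_add_left ?_ _
          exact le_trans le_self_add (hdes n)
      _ ≤ (S.expect π x 1 S.Jstar + ε) + S.stageCost π x 0 := by
          refine add_le_add_left (add_le_add_right (SSP.geom_sum_le ε n) _) _
      _ = (S.stageCost π x 0 + S.expect π x 1 S.Jstar) + ε := by ring
      _ = S.Q S.Jstar x u + ε := by rw [hQ0]
  exact le_trans (S.Jstar_le_Jcost hπ x) hJc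

lemma bellman_eq (x : X) : S.Jstar x = S.bellman S.Jstar x :=
  le_antisymm (S.Jstar_le_bellman x) (S.bellman_le_Jstar x)

lemma expect_shift (n : ℕ) : ∀ (π : ℕ → X → U) (x : X) (k : ℕ) (F : X → ℝ≥0∞),
    S.expect π x (n + k) F = S.expect π x n (fun z => S.expect (SSP.tail π n) z k F) := by
  induction n with
  | zero =>
    intro π x k F
    rw [S.expect_zero]
    have h : SSP.tail π 0 = π := by funext m; show π (0+m) = π m; rw [Nat.zero_add]
    rw [h, Nat.zero_add]
  | succ n ih =>
    intro π x k F
    have e1 : n + 1 + k = (n + k) + 1 := by omega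
    have htt : SSP.tail (SSP.tail π 1) n = SSP.tail π (n+1) := by
      funext m; exact congrArg π (by omega)
    rw [e1, expect_one, expect_one]
    refine tsum_congr fun w => ?_
    congr 1
    rw [ih]
    congr 1
    funext z
    rw [htt]

lemma stage_shift (π : ℕ → X → U) (x : X) (n m : ℕ) :
    S.stageCost π x (n + m) = S.expect π x n (fun z => S.stageCost (SSP.tail π n) z m) := by
  show S.expect π x (n+m) _ = _
  rw [expect_shift]
  rfl

lemma expect_Jstar_le_tail {π : ℕ → X → U} (hπ : S.IsPolicy π) (x : X) (n : ℕ) :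
    S.expect π x n S.Jstar ≤ ∑' m, S.stageCost π x (m + n) := by
  calc S.expect π x n S.Jstar
      ≤ S.expect π x n (fun z => S.Jcost (SSP.tail π n) z) :=
        S.expect_mono π x n fun z => S.Jstar_le_Jcost (S.tail_policy hπ n) z
    _ = ∑' (z : X) (m : ℕ), S.stateDist π x n z * S.stageCost (SSP.tail π n) z m := by
        refine tsum_congr fun z => ?_
        rw [ENNReal.tsum_mul_left]; rfl
    _ = ∑' (m : ℕ) (z : X), S.stateDist π x n z * S.stageCost (SSP.tail π n) z m :=
        ENNReal.tsum_comm
    _ = ∑' m, S.stageCost π x (n + m) := tsum_congr fun m => (S.stage_shift π x n m).symm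
    _ = ∑' m, S.stageCost π x (m + n) := tsum_congr fun m => by rw [Nat.add_comm]

lemma expect_Jstar_tendsto {π : ℕ → X → U} (hπ : S.IsPolicy π) (x : X)
    (h : S.Jcost π x ≠ ⊤) :
    Tendsto (fun n => S.expect π x n S.Jstar) atTop (nhds 0) := by
  have h0 := ENNReal.tendsto_sum_nat_add (fun k => S.stageCost π x k) h
  exact tendsto_of_tendsto_of_tendsto_of_le_of_le tendsto_const_nhds h0
    (fun n => zero_le) (fun n => S.expect_Jstar_le_tail hπ x n)

lemma vi_upper (V : ℕ → X → ℝ≥0∞) (hV : ∀ k x, V (k+1) x = S.bellman (V k) x) :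
    ∀ n (π : ℕ → X → U), S.IsPolicy π → ∀ x,
      V n x ≤ (∑ k ∈ Finset.range n, S.stageCost π x k) + S.expect π x n (V 0) := by
  intro n
  induction n with
  | zero =>
    intro π hπ x
    simp [S.expect_zero]
  | succ n ih =>
    intro π hπ x
    rw [hV n x]
    calc S.bellman (V n) x ≤ S.Q (V n) x (π 0 x) := iInf₂_le _ (hπ 0 x)
      _ = (∑' w, S.P x (π 0 x) w * S.g x (π 0 x) w)
          + ∑' w, S.P x (π 0 x) w * V n (S.f x (π 0 x) w) := S.Q_eq _ x _
      _ ≤ (∑' w, S.P x (π 0 x) w * S.g x (π 0 x) w)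
          + ∑' w, S.P x (π 0 x) w *
            ((∑ k ∈ Finset.range n, S.stageCost (SSP.tail π 1) (S.f x (π 0 x) w) k)
              + S.expect (SSP.tail π 1) (S.f x (π 0 x) w) n (V 0)) := by
          refine add_le_add_right ?_ _
          refine ENNReal.tsum_le_tsum (fun w => mul_le_mul_right ?_ _)
          exact ih (SSP.tail π 1) (S.tail_policy hπ 1) _
      _ = S.stageCost π x 0
          + ((∑ k ∈ Finset.range n, S.stageCost π x (k+1)) + S.expect π x (n+1) (V 0)) := by
          rw [S.stage_zero]
          congr 1
          calc ∑' w, S.P x (π 0 x) w *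
              ((∑ k ∈ Finset.range n, S.stageCost (SSP.tail π 1) (S.f x (π 0 x) w) k)
                + S.expect (SSP.tail π 1) (S.f x (π 0 x) w) n (V 0))
              = (∑' w, S.P x (π 0 x) w *
                  ∑ k ∈ Finset.range n, S.stageCost (SSP.tail π 1) (S.f x (π 0 x) w) k)
                + ∑' w, S.P x (π 0 x) w * S.expect (SSP.tail π 1) (S.f x (π 0 x) w) n (V 0) := by
                rw [← ENNReal.tsum_add]
                exact tsum_congr fun w => mul_add _ _ _
            _ = (∑ k ∈ Finset.range n, S.stageCost π x (k+1)) + S.expect π x (n+1) (V 0) := by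
                congr 1
                · calc ∑' w, S.P x (π 0 x) w *
                      ∑ k ∈ Finset.range n, S.stageCost (SSP.tail π 1) (S.f x (π 0 x) w) k
                      = ∑' w, ∑ k ∈ Finset.range n,
                          S.P x (π 0 x) w * S.stageCost (SSP.tail π 1) (S.f x (π 0 x) w) k :=
                        tsum_congr fun w => Finset.mul_sum _ _ _
                    _ = ∑ k ∈ Finset.range n, ∑' w,
                          S.P x (π 0 x) w * S.stageCost (SSP.tail π 1) (S.f x (π 0 x) w) k :=
                        Summable.tsum_finsetSum fun k _ => ENNReal.summable
                    _ = ∑ k ∈ Finset.range n, S.stageCost π x (k+1) :=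
                        Finset.sum_congr rfl fun k _ => (S.stage_one π x k).symm
                · exact (S.expect_one π x n (V 0)).symm
      _ = (∑ k ∈ Finset.range (n+1), S.stageCost π x k) + S.expect π x (n+1) (V 0) := by
          rw [Finset.sum_range_succ' (fun k => S.stageCost π x k) n]
          ring

lemma vi_tendsto (Jseq : ℕ → X → ℝ≥0∞) (c : ℝ≥0)
    (h0 : ∀ x, S.Jstar x ≤ Jseq 0 x ∧ Jseq 0 x ≤ (c : ℝ≥0∞) * S.Jstar x)
    (hrec : ∀ k x, Jseq (k + 1) x = S.bellman (Jseq k) x) (x : X) :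
    Tendsto (fun k => Jseq k x) atTop (nhds (S.Jstar x)) := by
  have hlow : ∀ k x, S.Jstar x ≤ Jseq k x := by
    intro k
    induction k with
    | zero => exact fun x => (h0 x).1
    | succ k ih =>
      intro x
      rw [hrec]
      calc S.Jstar x = S.bellman S.Jstar x := S.bellman_eq x
        _ ≤ S.bellman (Jseq k) x := S.bellman_mono ih x
  by_cases hx : S.Jstar x = ⊤
  · have hall : ∀ k, Jseq k x = ⊤ := fun k => top_le_iff.mp (hx ▸ hlow k x)
    simp only [hall, hx]
    exact tendsto_const_nhds
  rw [tendsto_order]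
  constructor
  · intro b hb
    exact Filter.Eventually.of_forall fun k => lt_of_lt_of_le hb (hlow k x)
  · intro b hb
    obtain ⟨r, hr, hra⟩ := ENNReal.lt_iff_exists_add_pos_lt.mp hb
    have hr2 : (0:ℝ≥0∞) < (r : ℝ≥0∞) / 2 :=
      ENNReal.div_pos (by exact_mod_cast hr.ne') (by norm_num)
    have hr2top : (r : ℝ≥0∞) / 2 ≠ ⊤ := by
      refine (ENNReal.div_lt_top ENNReal.coe_ne_top (by norm_num)).ne
    have hJlt : S.Jstar x < S.Jstar x + (r : ℝ≥0∞) / 2 :=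
      ENNReal.lt_add_right hx hr2.ne'
    have hJlt' : (⨅ π ∈ {π | S.IsPolicy π}, S.Jcost π x) < S.Jstar x + (r : ℝ≥0∞) / 2 := hJlt
    obtain ⟨π, hπx⟩ := iInf_lt_iff.mp hJlt'
    obtain ⟨hπ, hcost⟩ := iInf_lt_iff.mp hπx
    have hπ' : S.IsPolicy π := hπ
    have hfin : S.Jcost π x ≠ ⊤ :=
      (lt_of_lt_of_le hcost (le_of_lt (by
        exact lt_of_le_of_lt le_rfl (by
          exact ENNReal.add_lt_top.mpr ⟨lt_top_iff_ne_top.mpr hx, lt_top_iff_ne_top.mpr hr2top⟩)))).ne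
    have htt := S.expect_Jstar_tendsto hπ' x hfin
    have htt2 : Tendsto (fun n => (c : ℝ≥0∞) * S.expect π x n S.Jstar) atTop (nhds 0) := by
      have := ENNReal.Tendsto.const_mul htt (Or.inr ENNReal.coe_ne_top) (a := (c : ℝ≥0∞))
      simpa using this
    have hev : ∀ᶠ n in atTop, (c : ℝ≥0∞) * S.expect π x n S.Jstar ≤ (r : ℝ≥0∞) / 2 :=
      (ENNReal.tendsto_nhds_zero.mp htt2) _ hr2
    refine hev.mono fun n hn => ?_
    have hub := S.vi_upper Jseq hrec n π hπ' x
    have h2 : S.expect π x n (Jseq 0) ≤ (c : ℝ≥0∞) * S.expect π x n S.Jstar := by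
      calc S.expect π x n (Jseq 0)
          ≤ S.expect π x n (fun z => (c : ℝ≥0∞) * S.Jstar z) :=
            S.expect_mono π x n fun z => (h0 z).2
        _ = (c : ℝ≥0∞) * S.expect π x n S.Jstar := S.expect_smul π x n _ _
    calc Jseq n x ≤ S.Jcost π x + (r : ℝ≥0∞) / 2 := by
          refine le_trans hub (add_le_add (ENNReal.sum_le_tsum _) (le_trans h2 hn))
      _ < (S.Jstar x + (r : ℝ≥0∞) / 2) + (r : ℝ≥0∞) / 2 :=
          (ENNReal.add_lt_add_right hr2top hcost)
      _ = S.Jstar x + (r : ℝ≥0∞) := by rw [add_assoc, ENNReal.add_halves]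
      _ < b := hra

end SSP

/-- `J*` is the unique solution of Bellman's equation within
`{J | 0 ≤ J ≤ c·J* for some c > 0}`, and value iteration started from any
`J₀ ∈ W* = {J | J* ≤ J ≤ c·J* for some c > 0}` converges pointwise to `J*`. -/
theorem Jstar_unique_and_VI {X U W : Type*} [Countable W] (S : SSP X U W) :
    ((∀ x, S.Jstar x = S.bellman S.Jstar x) ∧
      ∀ J : X → ℝ≥0∞, (∃ c : ℝ≥0, 0 < c ∧ ∀ x, J x ≤ (c : ℝ≥0∞) * S.Jstar x) →
        (∀ x, J x = S.bellman J x) → J = S.Jstar) ∧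
    (∀ Jseq : ℕ → X → ℝ≥0∞,
      (∃ c : ℝ≥0, 0 < c ∧
        ∀ x, S.Jstar x ≤ Jseq 0 x ∧ Jseq 0 x ≤ (c : ℝ≥0∞) * S.Jstar x) →
      (∀ k x, Jseq (k + 1) x = S.bellman (Jseq k) x) →
      ∀ x, Tendsto (fun k => Jseq k x) atTop (nhds (S.Jstar x))) := by
  constructor
  · constructor
    · exact S.bellman_eq
    · intro J hJle hfix
      have hge : ∀ x, S.Jstar x ≤ J x := fun x =>
        S.Jstar_le_of_bellman_le J (fun z => le_of_eq (hfix z).symm) x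
      obtain ⟨c, _, hcle⟩ := hJle
      funext x
      have hT : Tendsto (fun _ : ℕ => J x) atTop (nhds (S.Jstar x)) := by
        refine S.vi_tendsto (fun _ => J) (max c 1) (fun x => ⟨hge x, ?_⟩) (fun k x => hfix x) x
        exact le_trans (hcle x)
          (mul_le_mul_left (ENNReal.coe_le_coe.mpr (le_max_left c 1)) _)
      exact tendsto_nhds_unique tendsto_const_nhds hT
  · intro Jseq hex hrec x
    obtain ⟨c, _, h0⟩ := hex
    exact S.vi_tendsto Jseq c h0 hrec x
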